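/- Let k ≥ 1 and let m, t be positive integers with m = t(k²−k+1). Consider real variables λ₁,…,λₘ satisfying 0 ≤ λᵢ ≤ k for all i, ∑λᵢ² = mk, and ∑λᵢ⁴ ≥ mk(2k−1). Then ∑λᵢ ≤ tk + t(k²−k)√(k−1), with equality if and only if exactly t of the λᵢ equal k and the remaining t(k²−k) of them equal √(k−1). -/

import Mathlib

set_option linter.unusedSectionVars false
open Finset

section Defs
variable {V : Type*} [Fintype V] [DecidableEq V]

theorem adjMatrix_isHermitian (G : SimpleGraph V) [DecidableRel G.Adj] :
    (SimpleGraph.adjMatrix ℝ G).IsHermitian := by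
  ext i j
  simp [Matrix.conjTranspose_apply, SimpleGraph.adjMatrix_apply, SimpleGraph.adj_comm]

/-- The eigenvalues of the adjacency matrix of a graph. -/
noncomputable def adjEigs (G : SimpleGraph V) : V → ℝ := by
  classical exact (adjMatrix_isHermitian G).eigenvalues

/-- The spectrum of the graph, as a multiset of real eigenvalues. -/
noncomputable def adjSpectrum (G : SimpleGraph V) : Multiset ℝ :=
  Finset.univ.val.map (adjEigs G)

/-- The energy per vertex of a graph. -/
noncomputable def epv (G : SimpleGraph V) : ℝ :=
  (∑ i, |adjEigs G i|) / (Fintype.card V)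

/-- The disjoint union of an indexed family of graphs. -/
def sigmaGraph {ι : Type*} {W : ι → Type*} (G : ∀ i, SimpleGraph (W i)) :
    SimpleGraph (Σ i, W i) where
  Adj x y := ∃ (i : ι) (a b : W i), (G i).Adj a b ∧ x = ⟨i, a⟩ ∧ y = ⟨i, b⟩
  symm := by refine ⟨?_⟩; rintro x y ⟨i, a, b, h, rfl, rfl⟩; exact ⟨i, b, a, h.symm, rfl, rfl⟩
  loopless := by
    refine ⟨?_⟩
    rintro x ⟨i, a, b, h, rfl, h2⟩
    simp only [Sigma.mk.inj_iff, heq_eq_eq, true_and] at h2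
    exact h.ne h2

/-- The bipartite incidence graph of a point-line geometry. -/
def incidenceGraph (P L : Type*) [Membership P L] : SimpleGraph (P ⊕ L) where
  Adj x y := (∃ p l, p ∈ l ∧ x = Sum.inl p ∧ y = Sum.inr l) ∨
             (∃ p l, p ∈ l ∧ x = Sum.inr l ∧ y = Sum.inl p)
  symm := by
    refine ⟨?_⟩
    rintro x y (⟨p, l, h, rfl, rfl⟩ | ⟨p, l, h, rfl, rfl⟩)
    · exact Or.inr ⟨p, l, h, rfl, rfl⟩
    · exact Or.inl ⟨p, l, h, rfl, rfl⟩
  loopless := by refine ⟨?_⟩; rintro x (⟨p, l, h, rfl, h2⟩ | ⟨p, l, h, rfl, h2⟩) <;> simp at h2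

/-- The bipartite double of a graph. -/
def bipartiteDouble (G : SimpleGraph V) : SimpleGraph (V ⊕ V) where
  Adj x y := (∃ u v, G.Adj u v ∧ x = Sum.inl u ∧ y = Sum.inr v) ∨
             (∃ u v, G.Adj u v ∧ x = Sum.inr u ∧ y = Sum.inl v)
  symm := by
    refine ⟨?_⟩
    rintro x y (⟨u, v, h, rfl, rfl⟩ | ⟨u, v, h, rfl, rfl⟩)
    · exact Or.inr ⟨v, u, h.symm, rfl, rfl⟩
    · exact Or.inl ⟨v, u, h.symm, rfl, rfl⟩
  loopless := by refine ⟨?_⟩; rintro x (⟨u, v, h, rfl, h2⟩ | ⟨u, v, h, rfl, h2⟩) <;> simp at h2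

end Defs

set_option maxHeartbeats 800000 in
/-- solution of the constrained optimization problem, with equality
characterization. -/
theorem optimization_bound_and_equality (k t m : ℕ) (hk : 1 ≤ k) (ht : 1 ≤ t)
    (hm : m = t * (k ^ 2 - k + 1)) (lam : Fin m → ℝ)
    (hnonneg : ∀ i, 0 ≤ lam i) (hle : ∀ i, lam i ≤ k)
    (hsq : ∑ i, (lam i) ^ 2 = (m : ℝ) * k)
    (hquart : ∑ i, (lam i) ^ 4 ≥ (m : ℝ) * k * (2 * (k : ℝ) - 1)) :
    (∑ i, lam i ≤ (t : ℝ) * k + (t : ℝ) * ((k : ℝ) ^ 2 - k) * Real.sqrt ((k : ℝ) - 1)) ∧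
    ((∑ i, lam i = (t : ℝ) * k + (t : ℝ) * ((k : ℝ) ^ 2 - k) * Real.sqrt ((k : ℝ) - 1)) ↔
      ((Finset.univ.filter fun i => lam i = (k : ℝ)).card = t ∧
        ∀ i, lam i = (k : ℝ) ∨ lam i = Real.sqrt ((k : ℝ) - 1))) := by
  classical
  by_cases hk1 : k = 1
  · -- k = 1 case
    subst hk1
    norm_num at hm hsq hquart hle ⊢
    subst hm
    have hone : ∀ i, lam i = 1 := by
      have hz : ∑ i : Fin m, (1 - (lam i)^2) = 0 := by
        rw [Finset.sum_sub_distrib, hsq]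
        simp
      have hnn : ∀ i ∈ Finset.univ, (0:ℝ) ≤ 1 - (lam i)^2 := by
        intro i _
        nlinarith [hnonneg i, hle i]
      have h := (Finset.sum_eq_zero_iff_of_nonneg hnn).mp hz
      intro i
      have h2 := h i (Finset.mem_univ i)
      nlinarith [hnonneg i]
    have hsum : ∑ i, lam i = (m : ℝ) := by
      rw [Finset.sum_congr rfl fun i _ => hone i]
      simp
    refine ⟨le_of_eq hsum, ?_, ?_⟩
    · intro _
      constructor
      · have hfe : (Finset.univ.filter fun i : Fin m => lam i = (1:ℝ)) = Finset.univ := by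
          apply Finset.filter_true_of_mem
          intro i _; exact hone i
        rw [hfe]; simp
      · intro i; exact Or.inl (hone i)
    · intro _; exact hsum
  · -- k ≥ 2 case
    have hk2 : 2 ≤ k := by omega
    have hK2 : (2:ℝ) ≤ (k:ℝ) := by exact_mod_cast hk2
    set s : ℝ := Real.sqrt ((k:ℝ) - 1) with hsdef
    have hs2 : s ^ 2 = (k:ℝ) - 1 := by
      rw [hsdef]; exact Real.sq_sqrt (by linarith)
    have hs0 : 0 ≤ s := by rw [hsdef]; exact Real.sqrt_nonneg _
    clear_value s
    have hs1 : 1 ≤ s := by nlinarith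
    have hsK : s < (k:ℝ) := by nlinarith
    have hkk : k ≤ k ^ 2 := Nat.le_self_pow two_ne_zero k
    have hmR : (m : ℝ) = (t : ℝ) * ((k:ℝ) ^ 2 - (k:ℝ) + 1) := by
      rw [hm]
      push_cast [Nat.cast_sub hkk]
      ring
    have hQ : ∀ i, 0 ≤ (lam i - s)^2 * ((k:ℝ) - lam i) * (lam i + (k:ℝ) + 2*s) := by
      intro i
      apply mul_nonneg (mul_nonneg (sq_nonneg _) (by linarith [hle i]))
      linarith [hnonneg i]
    have hkey : ∑ i, (lam i - s)^2 * ((k:ℝ) - lam i) * (lam i + (k:ℝ) + 2*s)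
        = (((k:ℝ)^2 + 2*s*(k:ℝ) + 3*s^2) * ((m:ℝ)*(k:ℝ)) + (s^2*(k:ℝ)*((k:ℝ)+2*s)) * (m:ℝ))
          - ((∑ i, (lam i)^4) + (2*s*((k:ℝ)+s)^2) * (∑ i, lam i)) := by
      rw [← hsq]
      rw [Finset.sum_congr rfl fun i (_ : i ∈ Finset.univ) =>
        show (lam i - s)^2 * ((k:ℝ) - lam i) * (lam i + (k:ℝ) + 2*s)
          = ((((k:ℝ)^2 + 2*s*(k:ℝ) + 3*s^2) * (lam i)^2 + (s^2*(k:ℝ)*((k:ℝ)+2*s)))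
            - ((lam i)^4 + (2*s*((k:ℝ)+s)^2) * lam i)) from by ring]
      rw [Finset.sum_sub_distrib, Finset.sum_add_distrib, Finset.sum_add_distrib]
      simp only [← Finset.mul_sum]
      rw [Finset.sum_const, Finset.card_univ, Fintype.card_fin, nsmul_eq_mul]
      ring
    have hscalar : 2*s*((k:ℝ)+s)^2 * ((t:ℝ)*(k:ℝ) + (t:ℝ)*((k:ℝ)^2-(k:ℝ))*s)
        = ((k:ℝ)^2 + 2*s*(k:ℝ) + 3*s^2) * ((m:ℝ)*(k:ℝ)) + (s^2*(k:ℝ)*((k:ℝ)+2*s)) * (m:ℝ)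
          - (m:ℝ)*(k:ℝ)*(2*(k:ℝ)-1) := by
      have hK1 : (k:ℝ) = s^2 + 1 := by linarith
      rw [hmR, hK1]; ring
    have hBpos : (0:ℝ) < 2*s*((k:ℝ)+s)^2 := by positivity
    have hsum : 2*s*((k:ℝ)+s)^2 * (((t:ℝ)*(k:ℝ) + (t:ℝ)*((k:ℝ)^2-(k:ℝ))*s) - ∑ i, lam i)
        = (∑ i, (lam i - s)^2 * ((k:ℝ) - lam i) * (lam i + (k:ℝ) + 2*s))
          + ((∑ i, (lam i)^4) - (m:ℝ)*(k:ℝ)*(2*(k:ℝ)-1)) := by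
      rw [hkey]
      linear_combination hscalar
    have hQsum : 0 ≤ ∑ i, (lam i - s)^2 * ((k:ℝ) - lam i) * (lam i + (k:ℝ) + 2*s) :=
      Finset.sum_nonneg fun i _ => hQ i
    have hbound : ∑ i, lam i ≤ (t:ℝ)*(k:ℝ) + (t:ℝ)*((k:ℝ)^2-(k:ℝ))*s := by
      have hBd : 0 ≤ 2*s*((k:ℝ)+s)^2 *
          (((t:ℝ)*(k:ℝ) + (t:ℝ)*((k:ℝ)^2-(k:ℝ))*s) - ∑ i, lam i) := by
        rw [hsum]; linarith [hQsum, hquart]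
      nlinarith [hBd, hBpos]
    refine ⟨hbound, ?_, ?_⟩
    · -- forward direction
      intro heq
      have hz : (∑ i, (lam i - s)^2 * ((k:ℝ) - lam i) * (lam i + (k:ℝ) + 2*s)) = 0 := by
        have h0 : (∑ i, (lam i - s)^2 * ((k:ℝ) - lam i) * (lam i + (k:ℝ) + 2*s))
            + ((∑ i, (lam i)^4) - (m:ℝ)*(k:ℝ)*(2*(k:ℝ)-1)) = 0 := by
          rw [← hsum, heq]; ring
        linarith [hQsum, hquart]
      have hdich : ∀ i, lam i = (k:ℝ) ∨ lam i = s := by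
        intro i
        have h0 := (Finset.sum_eq_zero_iff_of_nonneg fun i _ => hQ i).mp hz i (Finset.mem_univ i)
        have hpos : 0 < lam i + (k:ℝ) + 2*s := by linarith [hnonneg i]
        rcases mul_eq_zero.mp h0 with h | h
        · rcases mul_eq_zero.mp h with h | h
          · right
            have hz2 := pow_eq_zero_iff (n := 2) two_ne_zero |>.mp h
            linarith
          · left; linarith
        · exact absurd h (ne_of_gt hpos)
      refine ⟨?_, hdich⟩
      set F := Finset.univ.filter fun i : Fin m => lam i = (k:ℝ) with hFdef
      have hsplit := Finset.sum_filter_add_sum_filter_not Finset.univ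
        (fun i : Fin m => lam i = (k:ℝ)) (fun i => (lam i)^2)
      have hF : ∑ i ∈ F, (lam i)^2 = (F.card : ℝ) * (k:ℝ)^2 := by
        rw [Finset.sum_congr rfl fun i hi => by
          rw [(Finset.mem_filter.mp hi).2]]
        rw [Finset.sum_const, nsmul_eq_mul]
      have hFle : F.card ≤ m := by
        calc F.card ≤ Finset.univ.card := Finset.card_filter_le _ _
        _ = m := by simp
      have hcard2 : (Finset.univ.filter fun i : Fin m => ¬ lam i = (k:ℝ)).card = m - F.card := by
        have hc := Finset.card_filter_add_card_filter_not (s := Finset.univ)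
          (p := fun i : Fin m => lam i = (k:ℝ))
        simp only [Finset.card_univ, Fintype.card_fin] at hc
        rw [hFdef]
        omega
      have hNF : ∑ i ∈ Finset.univ.filter (fun i : Fin m => ¬ lam i = (k:ℝ)), (lam i)^2
          = ((m : ℝ) - (F.card:ℝ)) * ((k:ℝ) - 1) := by
        rw [Finset.sum_congr rfl fun i hi => by
          rcases hdich i with h | h
          · exact absurd h (Finset.mem_filter.mp hi).2
          · rw [h, hs2]]
        rw [Finset.sum_const, hcard2, nsmul_eq_mul, Nat.cast_sub hFle]
      rw [hF, hNF, hsq] at hsplit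
      have hcR : (F.card : ℝ) = (t : ℝ) := by
        have h3 : (F.card : ℝ) * ((k:ℝ)^2 - (k:ℝ) + 1) = (t:ℝ) * ((k:ℝ)^2 - (k:ℝ) + 1) := by
          rw [← hmR]
          linear_combination hsplit
        have hpos : (0:ℝ) < (k:ℝ)^2 - (k:ℝ) + 1 := by nlinarith
        exact mul_right_cancel₀ (ne_of_gt hpos) h3
      exact_mod_cast hcR
    · -- reverse direction
      rintro ⟨hcard, hdich⟩
      set F := Finset.univ.filter fun i : Fin m => lam i = (k:ℝ) with hFdef
      have hsplit := Finset.sum_filter_add_sum_filter_not Finset.univ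
        (fun i : Fin m => lam i = (k:ℝ)) (fun i => lam i)
      have hF : ∑ i ∈ F, lam i = (t : ℝ) * (k:ℝ) := by
        rw [Finset.sum_congr rfl fun i hi => (Finset.mem_filter.mp hi).2]
        rw [Finset.sum_const, nsmul_eq_mul, hcard]
      have hFle : F.card ≤ m := by
        calc F.card ≤ Finset.univ.card := Finset.card_filter_le _ _
        _ = m := by simp
      have htm : t ≤ m := by rw [← hcard]; exact hFle
      have hcard2 : (Finset.univ.filter fun i : Fin m => ¬ lam i = (k:ℝ)).card = m - t := by
        have hc := Finset.card_filter_add_card_filter_not (s := Finset.univ)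
          (p := fun i : Fin m => lam i = (k:ℝ))
        simp only [Finset.card_univ, Fintype.card_fin] at hc
        rw [hFdef] at hcard
        omega
      have hNF : ∑ i ∈ Finset.univ.filter (fun i : Fin m => ¬ lam i = (k:ℝ)), lam i
          = ((m : ℝ) - (t:ℝ)) * s := by
        rw [Finset.sum_congr rfl fun i hi => by
          rcases hdich i with h | h
          · exact absurd h (Finset.mem_filter.mp hi).2
          · exact h]
        rw [Finset.sum_const, hcard2, nsmul_eq_mul, Nat.cast_sub htm]
      rw [hF, hNF] at hsplit
      rw [← hsplit, hmR]
      ring
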